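/- Let E be a real inner product space, u, u' ∈ E, and a, b ≥ 0 real scalars. If (a − b)·(a·‖u‖² − b·‖u'‖²) ≥ 0 and ‖u − u'‖ ≥ ε with ε ≥ 0, then ‖a·u − b·u'‖ ≥ √(a·b) · ε. -/

import Mathlib

/-- clean geometric-mean lower bound when the orderings of the scalar
pair and of the norm pair are aligned. -/
theorem aligned_sqrt_lower_bound
    {E : Type*} [NormedAddCommGroup E] [InnerProductSpace ℝ E]
    (u u' : E) (a b : ℝ) (ha : 0 ≤ a) (hb : 0 ≤ b)
    (halign : 0 ≤ (a - b) * (a * ‖u‖ ^ 2 - b * ‖u'‖ ^ 2))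
    (ε : ℝ) (hε : 0 ≤ ε) (hsep : ε ≤ ‖u - u'‖) :
    Real.sqrt (a * b) * ε ≤ ‖a • u - b • u'‖ := by
  have h1 : ‖a • u - b • u'‖ ^ 2 = a^2 * ‖u‖^2 - 2*(a*b)*(inner ℝ u u' : ℝ) + b^2 * ‖u'‖^2 := by
    rw [@norm_sub_sq_real]
    simp [norm_smul, real_inner_smul_left, real_inner_smul_right, abs_of_nonneg ha,
      abs_of_nonneg hb]
    ring
  have h2 : ‖u - u'‖ ^ 2 = ‖u‖^2 - 2*(inner ℝ u u' : ℝ) + ‖u'‖^2 := by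
    rw [@norm_sub_sq_real]
  have key : a * b * ‖u - u'‖ ^ 2 ≤ ‖a • u - b • u'‖ ^ 2 := by
    rw [h1, h2]; nlinarith [halign]
  calc Real.sqrt (a * b) * ε ≤ Real.sqrt (a * b) * ‖u - u'‖ := by
        exact mul_le_mul_of_nonneg_left hsep (Real.sqrt_nonneg _)
    _ = Real.sqrt (a * b * ‖u - u'‖ ^ 2) := by
        rw [Real.sqrt_mul (mul_nonneg ha hb), Real.sqrt_sq (norm_nonneg _)]
    _ ≤ Real.sqrt (‖a • u - b • u'‖ ^ 2) := Real.sqrt_le_sqrt key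
    _ = ‖a • u - b • u'‖ := Real.sqrt_sq (norm_nonneg _)
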